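/- For the function sn(k,t) defined by sn(k,t) = sin(√k·t)/√k for k>0 and t ≤ π/√k, sn(k,t)=0 for k>0 and t ≥ π/√k, sn(0,t)=t, and sn(k,t)=sinh(√(−k)·t)/√(−k) for k<0, the following holds: for fixed t > 0, sn(k,t) is nonincreasing in k, i.e., k₁ ≤ k₂ implies sn(k₁,t) ≥ sn(k₂,t). -/

import Mathlib

noncomputable def sn (k t : ℝ) : ℝ :=
  if 0 < k then
    (if t ≤ Real.pi / Real.sqrt k then Real.sin (Real.sqrt k * t) / Real.sqrt k else 0)
  else if k = 0 then t
  else Real.sinh (Real.sqrt (-k) * t) / Real.sqrt (-k)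

lemma aux_sin (x : ℝ) (hx : x ∈ Set.Icc 0 Real.pi) : x * Real.cos x ≤ Real.sin x := by
  have h : MonotoneOn (fun x => Real.sin x - x * Real.cos x) (Set.Icc 0 Real.pi) := by
    apply monotoneOn_of_deriv_nonneg (convex_Icc _ _)
    · fun_prop
    · apply Differentiable.differentiableOn; fun_prop
    · intro y hy
      rw [interior_Icc] at hy
      have hd : HasDerivAt (fun x => Real.sin x - x * Real.cos x)
          (Real.cos y - (1 * Real.cos y + y * (-Real.sin y))) y :=
        (Real.hasDerivAt_sin y).sub ((hasDerivAt_id y).mul (Real.hasDerivAt_cos y))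
      rw [hd.deriv]
      have : Real.cos y - (1 * Real.cos y + y * (-Real.sin y)) = y * Real.sin y := by ring
      rw [this]
      exact mul_nonneg hy.1.le (Real.sin_nonneg_of_nonneg_of_le_pi hy.1.le hy.2.le)
  have := h (Set.left_mem_Icc.mpr Real.pi_pos.le) hx hx.1
  simpa using this

lemma aux_sinh (x : ℝ) (hx : 0 ≤ x) : Real.sinh x ≤ x * Real.cosh x := by
  have h : MonotoneOn (fun x => x * Real.cosh x - Real.sinh x) (Set.Ici 0) := by
    apply monotoneOn_of_deriv_nonneg (convex_Ici _)
    · fun_prop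
    · apply Differentiable.differentiableOn; fun_prop
    · intro y hy
      rw [interior_Ici] at hy
      have hd : HasDerivAt (fun x => x * Real.cosh x - Real.sinh x)
          ((1 * Real.cosh y + y * Real.sinh y) - Real.cosh y) y :=
        (((hasDerivAt_id y).mul (Real.hasDerivAt_cosh y))).sub (Real.hasDerivAt_sinh y)
      rw [hd.deriv]
      have : (1 * Real.cosh y + y * Real.sinh y) - Real.cosh y = y * Real.sinh y := by ring
      rw [this]
      exact mul_nonneg (le_of_lt hy) (Real.sinh_nonneg_iff.mpr (le_of_lt hy))
  have := h (Set.mem_Ici.mpr le_rfl) (Set.mem_Ici.mpr hx) hx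
  simp only [zero_mul, Real.sinh_zero, sub_zero, sub_self] at this
  linarith

lemma sin_div_anti {a b : ℝ} (ha : 0 < a) (hab : a ≤ b) (hb : b ≤ Real.pi) :
    Real.sin b / b ≤ Real.sin a / a := by
  have h : AntitoneOn (fun x => Real.sin x / x) (Set.Icc a b) := by
    apply antitoneOn_of_deriv_nonpos (convex_Icc _ _)
    · apply ContinuousOn.div (Real.continuous_sin.continuousOn) continuousOn_id
      intro x hx; exact ne_of_gt (lt_of_lt_of_le ha hx.1)
    · intro y hy
      rw [interior_Icc] at hy
      have hy0 : y ≠ 0 := ne_of_gt (lt_trans ha hy.1)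
      exact ((Real.differentiable_sin y).div (differentiable_id y) hy0).differentiableWithinAt
    · intro y hy
      rw [interior_Icc] at hy
      have hy0 : (0:ℝ) < y := lt_trans ha hy.1
      have hd : HasDerivAt (fun x => Real.sin x / x)
          ((Real.cos y * y - Real.sin y * 1) / y ^ 2) y :=
        (Real.hasDerivAt_sin y).div (hasDerivAt_id y) (ne_of_gt hy0)
      rw [hd.deriv]
      apply div_nonpos_of_nonpos_of_nonneg _ (sq_nonneg y)
      have := aux_sin y ⟨hy0.le, le_trans hy.2.le hb⟩
      nlinarith
  exact h (Set.mem_Icc.mpr ⟨le_rfl, hab⟩) (Set.mem_Icc.mpr ⟨hab, le_rfl⟩) hab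

lemma sinh_div_mono {a b : ℝ} (ha : 0 < a) (hab : a ≤ b) :
    Real.sinh a / a ≤ Real.sinh b / b := by
  have h : MonotoneOn (fun x => Real.sinh x / x) (Set.Icc a b) := by
    apply monotoneOn_of_deriv_nonneg (convex_Icc _ _)
    · apply ContinuousOn.div (Real.continuous_sinh.continuousOn) continuousOn_id
      intro x hx; exact ne_of_gt (lt_of_lt_of_le ha hx.1)
    · intro y hy
      rw [interior_Icc] at hy
      have hy0 : y ≠ 0 := ne_of_gt (lt_trans ha hy.1)
      exact ((Real.differentiable_sinh y).div (differentiable_id y) hy0).differentiableWithinAt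
    · intro y hy
      rw [interior_Icc] at hy
      have hy0 : (0:ℝ) < y := lt_trans ha hy.1
      have hd : HasDerivAt (fun x => Real.sinh x / x)
          ((Real.cosh y * y - Real.sinh y * 1) / y ^ 2) y :=
        (Real.hasDerivAt_sinh y).div (hasDerivAt_id y) (ne_of_gt hy0)
      rw [hd.deriv]
      apply div_nonneg _ (sq_nonneg y)
      have := aux_sinh y hy0.le
      nlinarith
  exact h (Set.mem_Icc.mpr ⟨le_rfl, hab⟩) (Set.mem_Icc.mpr ⟨hab, le_rfl⟩) hab

theorem sn_antitone_in_k (t : ℝ) (ht : 0 < t) :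
    ∀ k₁ k₂ : ℝ, k₁ ≤ k₂ → sn k₂ t ≤ sn k₁ t := by
  -- sn k t ≤ t for k > 0
  have posLe : ∀ k : ℝ, 0 < k → sn k t ≤ t := by
    intro k hk
    have hs : 0 < Real.sqrt k := Real.sqrt_pos.mpr hk
    rw [sn, if_pos hk]
    split_ifs with h
    · calc Real.sin (Real.sqrt k * t) / Real.sqrt k
          ≤ (Real.sqrt k * t) / Real.sqrt k := by
            apply div_le_div_of_nonneg_right _ hs.le
            · exact Real.sin_le (by positivity)
      _ = t := by field_simp
    · exact ht.le
  -- sn k t ≥ 0 for k > 0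
  have posNonneg : ∀ k : ℝ, 0 < k → 0 ≤ sn k t := by
    intro k hk
    have hs : 0 < Real.sqrt k := Real.sqrt_pos.mpr hk
    rw [sn, if_pos hk]
    split_ifs with h
    · apply div_nonneg _ hs.le
      apply Real.sin_nonneg_of_nonneg_of_le_pi (by positivity)
      calc Real.sqrt k * t ≤ Real.sqrt k * (Real.pi / Real.sqrt k) := by
            exact mul_le_mul_of_nonneg_left h hs.le
        _ = Real.pi := by field_simp
    · exact le_rfl
  -- sn k t ≥ t for k < 0
  have negGe : ∀ k : ℝ, k < 0 → t ≤ sn k t := by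
    intro k hk
    have hs : 0 < Real.sqrt (-k) := Real.sqrt_pos.mpr (by linarith)
    rw [sn, if_neg (by linarith), if_neg (ne_of_lt hk)]
    rw [le_div_iff₀ hs]
    have := Real.self_le_sinh_iff.mpr (show (0:ℝ) ≤ Real.sqrt (-k) * t by positivity)
    linarith [this]
  intro k₁ k₂ hk
  rcases lt_trichotomy k₁ 0 with h1 | h1 | h1
  · -- k₁ < 0
    rcases lt_trichotomy k₂ 0 with h2 | h2 | h2
    · -- both negative
      have hs1 : 0 < Real.sqrt (-k₁) := Real.sqrt_pos.mpr (by linarith)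
      have hs2 : 0 < Real.sqrt (-k₂) := Real.sqrt_pos.mpr (by linarith)
      have hle : Real.sqrt (-k₂) ≤ Real.sqrt (-k₁) := Real.sqrt_le_sqrt (by linarith)
      rw [sn, sn, if_neg (by linarith : ¬ (0:ℝ) < k₂), if_neg (ne_of_lt h2),
        if_neg (by linarith : ¬ (0:ℝ) < k₁), if_neg (ne_of_lt h1)]
      have key := sinh_div_mono (a := Real.sqrt (-k₂) * t) (b := Real.sqrt (-k₁) * t)
        (by positivity) (by nlinarith)
      have e1 : Real.sinh (Real.sqrt (-k₂) * t) / Real.sqrt (-k₂)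
          = t * (Real.sinh (Real.sqrt (-k₂) * t) / (Real.sqrt (-k₂) * t)) := by
        field_simp
      have e2 : Real.sinh (Real.sqrt (-k₁) * t) / Real.sqrt (-k₁)
          = t * (Real.sinh (Real.sqrt (-k₁) * t) / (Real.sqrt (-k₁) * t)) := by
        field_simp
      rw [e1, e2]
      exact mul_le_mul_of_nonneg_left key ht.le
    · subst h2
      have : sn 0 t = t := by rw [sn, if_neg (lt_irrefl 0), if_pos rfl]
      rw [this]; exact negGe k₁ h1
    · exact le_trans (posLe k₂ h2) (negGe k₁ h1)
  · subst h1
    have h0 : sn 0 t = t := by rw [sn, if_neg (lt_irrefl 0), if_pos rfl]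
    rw [h0]
    rcases eq_or_lt_of_le hk with h2 | h2
    · rw [← h2, h0]
    · exact posLe k₂ h2
  · -- both positive
    have h2 : 0 < k₂ := lt_of_lt_of_le h1 hk
    have hs1 : 0 < Real.sqrt k₁ := Real.sqrt_pos.mpr h1
    have hs2 : 0 < Real.sqrt k₂ := Real.sqrt_pos.mpr h2
    have hle : Real.sqrt k₁ ≤ Real.sqrt k₂ := Real.sqrt_le_sqrt hk
    rw [sn, sn, if_pos h1, if_pos h2]
    by_cases hb : t ≤ Real.pi / Real.sqrt k₂
    · have ha : t ≤ Real.pi / Real.sqrt k₁ := by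
        calc t ≤ Real.pi / Real.sqrt k₂ := hb
          _ ≤ Real.pi / Real.sqrt k₁ :=
            div_le_div_of_nonneg_left Real.pi_pos.le hs1 hle
      rw [if_pos hb, if_pos ha]
      have hbt : Real.sqrt k₂ * t ≤ Real.pi := by
        rw [le_div_iff₀ hs2] at hb; linarith [hb]
      have key := sin_div_anti (a := Real.sqrt k₁ * t) (b := Real.sqrt k₂ * t)
        (by positivity) (by nlinarith) hbt
      have e1 : Real.sin (Real.sqrt k₂ * t) / Real.sqrt k₂
          = t * (Real.sin (Real.sqrt k₂ * t) / (Real.sqrt k₂ * t)) := by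
        field_simp
      have e2 : Real.sin (Real.sqrt k₁ * t) / Real.sqrt k₁
          = t * (Real.sin (Real.sqrt k₁ * t) / (Real.sqrt k₁ * t)) := by
        field_simp
      rw [e1, e2]
      exact mul_le_mul_of_nonneg_left key ht.le
    · rw [if_neg hb]
      split_ifs with ha
      · apply div_nonneg _ hs1.le
        apply Real.sin_nonneg_of_nonneg_of_le_pi (by positivity)
        calc Real.sqrt k₁ * t ≤ Real.sqrt k₁ * (Real.pi / Real.sqrt k₁) :=
            mul_le_mul_of_nonneg_left ha hs1.le
          _ = Real.pi := by field_simp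
      · exact le_rfl
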